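/- For all real μ > 0 and real A, ∫_0^∞ t^{-1/2}·exp(-A²/(2t) - μ²t/2) dt = (√(2π)/μ)·exp(-μ·|A|). -/

import Mathlib

open Real MeasureTheory Set

namespace Stmt5Aux


lemma rpow_neg_half_eq {t : ℝ} (ht : 0 < t) : t ^ (-(1:ℝ)/2) = (Real.sqrt t)⁻¹ := by
  rw [show (-(1:ℝ)/2) = -(1/2) by norm_num, Real.rpow_neg ht.le, ← Real.sqrt_eq_rpow]

lemma int_major {d : ℝ} (hd : 0 < d) :
    IntegrableOn (fun t : ℝ => t ^ (-(1:ℝ)/2) * Real.exp (-(d^2) * t)) (Ioi 0) := by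
  have := integrableOn_rpow_mul_exp_neg_mul_rpow (s := -(1:ℝ)/2) (p := 1) (b := d^2)
    (by norm_num) one_pos (by positivity)
  simpa [Real.rpow_one] using this

lemma cont1 (c d : ℝ) :
    ContinuousOn (fun t : ℝ => (Real.sqrt t)⁻¹ * Real.exp (-(c^2/t) - d^2*t)) (Ioi 0) := by
  apply ContinuousOn.mul
  · exact ContinuousOn.inv₀ (Real.continuous_sqrt.continuousOn)
      (fun t ht => (Real.sqrt_pos.mpr ht).ne')
  · exact (Real.continuous_exp.comp_continuousOn <|
      ContinuousOn.sub (ContinuousOn.neg <| continuousOn_const.div continuousOn_id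
        (fun t ht => ne_of_gt ht)) (continuousOn_const.mul continuousOn_id))

lemma cont3 (c d : ℝ) :
    ContinuousOn (fun t : ℝ => (Real.sqrt t)⁻¹/t * Real.exp (-(c^2/t) - d^2*t)) (Ioi 0) := by
  have := (cont1 c d).div continuousOn_id (fun t (ht : t ∈ Ioi 0) => ne_of_gt ht)
  refine this.congr fun t ht => ?_
  simp only [Pi.div_apply, id]; ring

lemma int1 {c d : ℝ} (hd : 0 < d) :
    IntegrableOn (fun t : ℝ => (Real.sqrt t)⁻¹ * Real.exp (-(c^2/t) - d^2*t)) (Ioi 0) := by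
  refine Integrable.mono (int_major hd) ((cont1 c d).aestronglyMeasurable measurableSet_Ioi) ?_
  rw [ae_restrict_iff' measurableSet_Ioi]
  filter_upwards with t
  intro ht
  have ht' : (0:ℝ) < t := ht
  have h1 : (0:ℝ) < Real.sqrt t := Real.sqrt_pos.mpr ht'
  rw [Real.norm_eq_abs, Real.norm_eq_abs, abs_of_nonneg (by positivity),
    abs_of_nonneg (by positivity), rpow_neg_half_eq ht']
  have : Real.exp (-(c^2/t) - d^2*t) ≤ Real.exp (-(d^2)*t) := by
    apply Real.exp_le_exp.mpr
    have : 0 ≤ c^2/t := by positivity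
    nlinarith
  nlinarith [this, inv_pos.mpr h1]

lemma int3 {c d : ℝ} (hc : 0 < c) (hd : 0 < d) :
    IntegrableOn (fun t : ℝ => (Real.sqrt t)⁻¹/t * Real.exp (-(c^2/t) - d^2*t)) (Ioi 0) := by
  refine Integrable.mono ((int_major hd).const_mul (1/c^2))
    ((cont3 c d).aestronglyMeasurable measurableSet_Ioi) ?_
  rw [ae_restrict_iff' measurableSet_Ioi]
  filter_upwards with t
  intro ht
  have ht' : (0:ℝ) < t := ht
  have h1 : (0:ℝ) < Real.sqrt t := Real.sqrt_pos.mpr ht'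
  rw [Real.norm_eq_abs, Real.norm_eq_abs, abs_of_nonneg (by positivity),
    abs_of_nonneg (by positivity), rpow_neg_half_eq ht']
  -- exp(-(c^2/t)) ≤ t/c^2
  have hkey : Real.exp (-(c^2/t)) ≤ t/c^2 := by
    rw [Real.exp_neg]
    rw [inv_le_comm₀ (Real.exp_pos _) (by positivity)]
    calc (t/c^2)⁻¹ = c^2/t := by rw [inv_div]
    _ ≤ Real.exp (c^2/t) := by
        have := Real.add_one_le_exp (c^2/t)
        linarith
  have hsplit : Real.exp (-(c^2/t) - d^2*t) = Real.exp (-(c^2/t)) * Real.exp (-(d^2)*t) := by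
    rw [← Real.exp_add]; ring_nf
  rw [hsplit]
  have h2 : (Real.sqrt t)⁻¹/t * (Real.exp (-(c^2/t)) * Real.exp (-(d^2)*t))
      ≤ (Real.sqrt t)⁻¹/t * ((t/c^2) * Real.exp (-(d^2)*t)) := by
    apply mul_le_mul_of_nonneg_left _ (by positivity)
    exact mul_le_mul_of_nonneg_right hkey (Real.exp_pos _).le
  calc (Real.sqrt t)⁻¹/t * (Real.exp (-(c^2/t)) * Real.exp (-(d^2)*t))
      ≤ (Real.sqrt t)⁻¹/t * ((t/c^2) * Real.exp (-(d^2)*t)) := h2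
    _ = 1/c^2 * ((Real.sqrt t)⁻¹ * Real.exp (-(d^2)*t)) := by field_simp



lemma stepA {c d : ℝ} (hc : 0 < c) (hd : 0 < d) :
    ∫ t in Ioi (0:ℝ), (Real.sqrt t)⁻¹ * Real.exp (-(c^2/t) - d^2*t) =
      (c/d) * ∫ t in Ioi (0:ℝ), (Real.sqrt t)⁻¹/t * Real.exp (-(c^2/t) - d^2*t) := by
  set f : ℝ → ℝ := fun s => c^2/d^2 * s⁻¹ with hf
  have himg : f '' Ioi 0 = Ioi 0 := by
    ext x
    constructor
    · rintro ⟨s, hs, rfl⟩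
      have : (0:ℝ) < s := hs
      simp only [hf, mem_Ioi]
      positivity
    · intro hx
      have hx' : (0:ℝ) < x := hx
      refine ⟨c^2/d^2 * x⁻¹, by simp only [mem_Ioi]; positivity, ?_⟩
      simp only [hf]
      field_simp
  have hder : ∀ s ∈ Ioi (0:ℝ),
      HasDerivWithinAt f (c^2/d^2 * (-(s^2)⁻¹)) (Ioi 0) s := by
    intro s hs
    have hs' : (0:ℝ) < s := hs
    exact ((hasDerivAt_inv hs'.ne').const_mul (c^2/d^2)).hasDerivWithinAt
  have hinj : InjOn f (Ioi 0) := by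
    intro x hx y hy hxy
    have hx' : (0:ℝ) < x := hx
    have hy' : (0:ℝ) < y := hy
    have h0 : c^2/d^2 ≠ 0 := by positivity
    have := mul_left_cancel₀ h0 hxy
    exact inv_injective this
  conv_lhs => rw [← himg, integral_image_eq_integral_abs_deriv_smul measurableSet_Ioi hder hinj]
  rw [← MeasureTheory.integral_const_mul]
  refine setIntegral_congr_fun measurableSet_Ioi fun s hs => ?_
  have hs' : (0:ℝ) < s := hs
  have hss : Real.sqrt s * Real.sqrt s = s := Real.mul_self_sqrt hs'.le
  have hsp : (0:ℝ) < Real.sqrt s := Real.sqrt_pos.mpr hs'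
  have hfs : f s = c^2/(d^2*s) := by simp only [hf]; field_simp
  have hsf : Real.sqrt (f s) = c/(d*Real.sqrt s) := by
    rw [hfs, show c^2/(d^2*s) = (c/(d*Real.sqrt s))^2 by
      rw [div_pow, mul_pow, pow_two (Real.sqrt s), hss]]
    exact Real.sqrt_sq (by positivity)
  have hEf : Real.exp (-(c^2/(f s)) - d^2*(f s)) = Real.exp (-(c^2/s) - d^2*s) := by
    rw [hfs]
    congr 1
    field_simp
    ring
  rw [smul_eq_mul, mul_neg, abs_neg, abs_of_nonneg (by positivity)]
  rw [hEf, hsf]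
  field_simp
  ring_nf
  rw [Real.sq_sqrt hs'.le]



lemma stepB {c d : ℝ} (hc : 0 < c) (hd : 0 < d) :
    ∫ t in Ioi (0:ℝ), (d/2 * (Real.sqrt t)⁻¹ + c/2 * ((Real.sqrt t)⁻¹/t)) *
        Real.exp (-(c^2/t) - d^2*t) =
      Real.exp (-(2*(c*d))) * Real.sqrt π := by
  set f : ℝ → ℝ := fun t => d * Real.sqrt t - c * (Real.sqrt t)⁻¹ with hf
  set f' : ℝ → ℝ := fun t => d/2 * (Real.sqrt t)⁻¹ + c/2 * ((Real.sqrt t)⁻¹/t) with hf'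
  have sqp : ∀ {t : ℝ}, 0 < t → 0 < Real.sqrt t := fun ht => Real.sqrt_pos.mpr ht
  have hder : ∀ t ∈ Ioi (0:ℝ), HasDerivWithinAt f (f' t) (Ioi 0) t := by
    intro t ht
    have ht' : (0:ℝ) < t := ht
    have hst := sqp ht'
    have h1 : HasDerivAt (fun y : ℝ => d * Real.sqrt y) (d * (1/(2*Real.sqrt t))) t :=
      (Real.hasDerivAt_sqrt ht'.ne').const_mul d
    have h2 : HasDerivAt (fun y : ℝ => c * (Real.sqrt y)⁻¹)
        (c * (-(1/(2*Real.sqrt t)) / (Real.sqrt t)^2)) t :=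
      ((Real.hasDerivAt_sqrt ht'.ne').inv hst.ne').const_mul c
    have h := (h1.sub h2).hasDerivWithinAt (s := Ioi (0:ℝ))
    convert h using 1
    · rfl
    · rfl
    · rfl
    have hss : Real.sqrt t * Real.sqrt t = t := Real.mul_self_sqrt ht'.le
    simp only [hf']
    rw [pow_two]
    field_simp
    ring_nf
    rw [Real.sq_sqrt ht'.le]
  have hinj : InjOn f (Ioi 0) := by
    apply StrictMonoOn.injOn
    intro x hx y hy hxy
    have hx' : (0:ℝ) < x := hx
    have hy' : (0:ℝ) < y := hy
    have h1 : Real.sqrt x < Real.sqrt y := Real.sqrt_lt_sqrt hx'.le hxy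
    have h2 : (Real.sqrt y)⁻¹ < (Real.sqrt x)⁻¹ := by
      exact inv_strictAnti₀ (sqp hx') h1
    simp only [hf]
    have := sqp hx'
    nlinarith
  have himg : f '' Ioi 0 = univ := by
    ext u
    simp only [mem_univ, iff_true, mem_image]
    set r := Real.sqrt (u^2 + 4*(c*d)) with hr
    have hr2 : r^2 = u^2 + 4*(c*d) := Real.sq_sqrt (by positivity)
    have hrn : 0 ≤ r := Real.sqrt_nonneg _
    have hru : -u < r := by nlinarith [mul_pos hc hd]
    have hx : (0:ℝ) < (u+r)/(2*d) := by
      apply div_pos (by linarith) (by linarith)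
    refine ⟨((u+r)/(2*d))^2, by simpa using pow_pos hx 2, ?_⟩
    simp only [hf]
    rw [Real.sqrt_sq hx.le]
    have hur : u + r ≠ 0 := by linarith
    field_simp
    nlinarith [hr2]
  have hgauss : ∫ x : ℝ, Real.exp (-x^2) = Real.sqrt π := by
    have := integral_gaussian 1
    simpa using this
  have key : Real.sqrt π = ∫ t in Ioi (0:ℝ), |f' t| • Real.exp (-(f t)^2) := by
    rw [← hgauss, ← setIntegral_univ, ← himg,
      integral_image_eq_integral_abs_deriv_smul measurableSet_Ioi hder hinj]
  have hpt : ∀ t ∈ Ioi (0:ℝ), |f' t| • Real.exp (-(f t)^2) =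
      Real.exp (2*(c*d)) * ((d/2 * (Real.sqrt t)⁻¹ + c/2 * ((Real.sqrt t)⁻¹/t)) *
        Real.exp (-(c^2/t) - d^2*t)) := by
    intro t ht
    have ht' : (0:ℝ) < t := ht
    have hst := sqp ht'
    have hss : Real.sqrt t * Real.sqrt t = t := Real.mul_self_sqrt ht'.le
    have hfpos : 0 < f' t := by
      simp only [hf']
      positivity
    have hsq : (f t)^2 = d^2*t + c^2/t - 2*(c*d) := by
      simp only [hf]
      field_simp
      ring_nf
      rw [show (Real.sqrt t)^4 = ((Real.sqrt t)^2)^2 by ring, Real.sq_sqrt ht'.le]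
      ring
    rw [smul_eq_mul, abs_of_pos hfpos, hsq,
      show -(d^2*t + c^2/t - 2*(c*d)) = (-(c^2/t) - d^2*t) + 2*(c*d) by ring,
      Real.exp_add]
    simp only [hf']
    ring
  rw [setIntegral_congr_fun measurableSet_Ioi hpt, MeasureTheory.integral_const_mul] at key
  have he : Real.exp (2*(c*d)) ≠ 0 := (Real.exp_pos _).ne'
  rw [Real.exp_neg, inv_mul_eq_div, eq_div_iff he, mul_comm]
  exact key.symm

lemma keylemma {c d : ℝ} (hc : 0 < c) (hd : 0 < d) :
    ∫ t in Ioi (0:ℝ), (Real.sqrt t)⁻¹ * Real.exp (-(c^2/t) - d^2*t) =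
      Real.sqrt π / d * Real.exp (-(2*(c*d))) := by
  have hB := stepB hc hd
  have hsplit : ∫ t in Ioi (0:ℝ), (d/2 * (Real.sqrt t)⁻¹ + c/2 * ((Real.sqrt t)⁻¹/t)) *
        Real.exp (-(c^2/t) - d^2*t) =
      d/2 * (∫ t in Ioi (0:ℝ), (Real.sqrt t)⁻¹ * Real.exp (-(c^2/t) - d^2*t)) +
      c/2 * (∫ t in Ioi (0:ℝ), (Real.sqrt t)⁻¹/t * Real.exp (-(c^2/t) - d^2*t)) := by
    rw [← MeasureTheory.integral_const_mul, ← MeasureTheory.integral_const_mul,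
      ← MeasureTheory.integral_add (((int1 hd).const_mul _)) ((int3 hc hd).const_mul _)]
    refine setIntegral_congr_fun measurableSet_Ioi fun t ht => ?_
    ring
  rw [hsplit] at hB
  have hA := stepA hc hd
  set I1 := ∫ t in Ioi (0:ℝ), (Real.sqrt t)⁻¹ * Real.exp (-(c^2/t) - d^2*t) with hI1
  set I3 := ∫ t in Ioi (0:ℝ), (Real.sqrt t)⁻¹/t * Real.exp (-(c^2/t) - d^2*t) with hI3
  have h3 : I3 = d/c * I1 := by
    rw [hA]
    field_simp
  rw [h3] at hB
  have e1 : c/2 * (d/c*I1) = d/2 * I1 := by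
    field_simp
  rw [e1] at hB
  rw [div_mul_eq_mul_div, eq_div_iff hd.ne']
  linear_combination hB

end Stmt5Aux

open Stmt5Aux in
theorem stmt5 (μ A : ℝ) (hμ : 0 < μ) :
    ∫ t in Set.Ioi (0:ℝ), t ^ (-(1:ℝ)/2) * Real.exp (-A ^ 2 / (2 * t) - μ ^ 2 * t / 2) =
      (Real.sqrt (2 * π) / μ) * Real.exp (-μ * |A|) := by
  rcases eq_or_ne A 0 with rfl | hA
  · have h1 : ∫ t in Set.Ioi (0:ℝ), t ^ (-(1:ℝ)/2) *
        Real.exp (-(0:ℝ) ^ 2 / (2 * t) - μ ^ 2 * t / 2) =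
        ∫ t in Set.Ioi (0:ℝ), t ^ ((1:ℝ)/2 - 1) * Real.exp (-(μ^2/2 * t)) := by
      refine setIntegral_congr_fun measurableSet_Ioi fun t ht => ?_
      rw [show (1:ℝ)/2 - 1 = -(1:ℝ)/2 by norm_num]
      congr 1
      congr 1
      ring
    rw [h1, integral_rpow_mul_exp_neg_mul_Ioi (by norm_num) (by positivity),
      Real.Gamma_one_half_eq, ← Real.sqrt_eq_rpow,
      show (1:ℝ)/(μ^2/2) = 2/μ^2 by field_simp,
      show Real.sqrt (2/μ^2) = Real.sqrt 2 / μ by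
        rw [show (2:ℝ)/μ^2 = (Real.sqrt 2/μ)^2 by
          rw [div_pow, Real.sq_sqrt (by norm_num : (0:ℝ) ≤ 2)]]
        exact Real.sqrt_sq (by positivity),
      Real.sqrt_mul (by norm_num : (0:ℝ) ≤ 2)]
    simp [Real.exp_zero]
    ring
  · have hc : 0 < |A| / Real.sqrt 2 := by
      apply div_pos (abs_pos.mpr hA) (Real.sqrt_pos.mpr (by norm_num))
    have hd : 0 < μ / Real.sqrt 2 := by
      apply div_pos hμ (Real.sqrt_pos.mpr (by norm_num))
    set c := |A| / Real.sqrt 2 with hcdef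
    set d := μ / Real.sqrt 2 with hddef
    have hs2 : Real.sqrt 2 * Real.sqrt 2 = 2 := Real.mul_self_sqrt (by norm_num)
    have hc2 : c^2 = A^2/2 := by
      rw [hcdef, div_pow, pow_two (Real.sqrt 2), hs2, sq_abs]
    have hd2 : d^2 = μ^2/2 := by
      rw [hddef, div_pow, pow_two (Real.sqrt 2), hs2]
    have h1 : ∫ t in Set.Ioi (0:ℝ), t ^ (-(1:ℝ)/2) *
        Real.exp (-A ^ 2 / (2 * t) - μ ^ 2 * t / 2) =
        ∫ t in Set.Ioi (0:ℝ), (Real.sqrt t)⁻¹ * Real.exp (-(c^2/t) - d^2*t) := by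
      refine setIntegral_congr_fun measurableSet_Ioi fun t ht => ?_
      have ht' : (0:ℝ) < t := ht
      rw [rpow_neg_half_eq ht']
      congr 1
      rw [hc2, hd2]
      ring_nf
    rw [h1, keylemma hc hd]
    have h2cd : 2*(c*d) = μ * |A| := by
      rw [hcdef, hddef]
      field_simp
      rw [Real.sq_sqrt (by norm_num : (0:ℝ) ≤ 2)]
    rw [h2cd, Real.sqrt_mul (by norm_num : (0:ℝ) ≤ 2), hddef,
      show -μ * |A| = -(μ * |A|) by ring]
    congr 1
    field_simp
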